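/- Let 𝔥 be a nonzero complex Hilbert space and 𝒫, ℛ anti-commuting unitary involutions on 𝔥 (𝒫ℛ = −ℛ𝒫). Let T = α₀·I + α₁·𝒫 + α₂·ℛ + α₃·(iℛ𝒫) where α₀, α₁, α₃ are real and α₂ is purely imaginary, let ξ ∈ ℝ, and set 𝒫_ξ := exp(iξℛ)𝒫. Then T𝒫_ξ = 𝒫_ξT* (where T* is the Hilbert-space adjoint of T) if and only if α₁ sin ξ = α₃ cos ξ. Consequently, for every such T there exists ξ ∈ [0, 2π) with T𝒫_ξ = 𝒫_ξT*. -/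

import Mathlib

open scoped InnerProductSpace Real

lemma exp_I_smul_of_sq {A : Type*} [NormedRing A] [NormedAlgebra ℂ A] [CompleteSpace A]
    (r : A) (hr : r * r = 1) (ξ : ℝ) :
    NormedSpace.exp ((Complex.I * (ξ : ℂ)) • r)
      = ((Real.cos ξ : ℂ)) • (1 : A) + (Complex.I * (Real.sin ξ : ℂ)) • r := by
  have hre : ∀ k : ℕ, r ^ (2*k) = 1 := by
    intro k; rw [pow_mul, pow_two, hr, one_pow]
  have hro : ∀ k : ℕ, r ^ (2*k+1) = r := by
    intro k; rw [pow_succ, hre, one_mul]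
  have hIe : ∀ k : ℕ, (Complex.I * (ξ:ℂ)) ^ (2*k) = (-1)^k * (ξ:ℂ)^(2*k) := by
    intro k; rw [mul_pow, pow_mul Complex.I, Complex.I_sq]
  have hIo : ∀ k : ℕ, (Complex.I * (ξ:ℂ)) ^ (2*k+1)
      = Complex.I * ((-1)^k * (ξ:ℂ)^(2*k+1)) := by
    intro k; rw [pow_succ, hIe]; ring
  rw [NormedSpace.exp_eq_tsum (𝕂 := ℂ)]
  refine HasSum.tsum_eq ?_
  have heven : HasSum (fun k : ℕ => (Nat.factorial (2*k) : ℂ)⁻¹ • ((Complex.I * (ξ:ℂ)) • r) ^ (2*k))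
      (((Real.cos ξ : ℂ)) • (1 : A)) := by
    have h1 := (Complex.hasSum_cos (ξ:ℂ)).smul_const (1 : A)
    rw [← Complex.ofReal_cos] at h1
    convert h1 using 2 with k
    rw [smul_pow, hre, hIe, smul_smul]
    congr 1
    field_simp
  have hodd : HasSum (fun k : ℕ => (Nat.factorial (2*k+1) : ℂ)⁻¹ • ((Complex.I * (ξ:ℂ)) • r) ^ (2*k+1))
      ((Complex.I * (Real.sin ξ : ℂ)) • r) := by
    have h1 := ((Complex.hasSum_sin (ξ:ℂ)).mul_left Complex.I).smul_const r
    rw [← Complex.ofReal_sin] at h1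
    convert h1 using 2 with k
    rw [smul_pow, hro, hIo, smul_smul]
    congr 1
    field_simp
  exact HasSum.even_add_odd
    (f := fun n => (Nat.factorial n : ℂ)⁻¹ • ((Complex.I * (ξ:ℂ)) • r) ^ n) heven hodd

open Complex ContinuousLinearMap in
theorem krein_key
    {𝕳 : Type*} [NormedAddCommGroup 𝕳] [InnerProductSpace ℂ 𝕳] [CompleteSpace 𝕳]
    [Nontrivial 𝕳]
    (P R : 𝕳 →L[ℂ] 𝕳)
    (hP2 : ∀ f, P (P f) = f)
    (hPinner : ∀ f g : 𝕳, ⟪P f, P g⟫_ℂ = ⟪f, g⟫_ℂ)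
    (hR2 : ∀ f, R (R f) = f)
    (hRinner : ∀ f g : 𝕳, ⟪R f, R g⟫_ℂ = ⟪f, g⟫_ℂ)
    (hanti : P ∘L R = -(R ∘L P))
    (α₀ α₁ α₃ a₂ : ℝ)
    (T : 𝕳 →L[ℂ] 𝕳)
    (hT : T = (α₀ : ℂ) • (1 : 𝕳 →L[ℂ] 𝕳) + (α₁ : ℂ) • P
        + (Complex.I * (a₂ : ℂ)) • R + (α₃ : ℂ) • (Complex.I • (R ∘L P)))
    (ξ : ℝ) :
    T ∘L (NormedSpace.exp ((Complex.I * (ξ : ℂ)) • R) ∘L P)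
        = (NormedSpace.exp ((Complex.I * (ξ : ℂ)) • R) ∘L P) ∘L ContinuousLinearMap.adjoint T
      ↔ α₁ * Real.sin ξ = α₃ * Real.cos ξ := by
  -- basic ring facts
  have hpp : P * P = 1 := by ext f; simpa using hP2 f
  have hrr : R * R = 1 := by ext f; simpa using hR2 f
  have hpr : P * R = -(R * P) := hanti
  have hpp' : ∀ x : 𝕳 →L[ℂ] 𝕳, P * (P * x) = x := by
    intro x; rw [← mul_assoc, hpp, one_mul]
  have hrr' : ∀ x : 𝕳 →L[ℂ] 𝕳, R * (R * x) = x := by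
    intro x; rw [← mul_assoc, hrr, one_mul]
  have hpr' : ∀ x : 𝕳 →L[ℂ] 𝕳, P * (R * x) = -(R * (P * x)) := by
    intro x; rw [← mul_assoc, hpr, neg_mul, mul_assoc]
  -- self-adjointness of P and R
  have hsP : star P = P := by
    rw [star_eq_adjoint]
    symm
    rw [eq_adjoint_iff]
    intro x y
    conv_lhs => rw [← hP2 y]
    rw [hPinner]
  have hsR : star R = R := by
    rw [star_eq_adjoint]
    symm
    rw [eq_adjoint_iff]
    intro x y
    conv_lhs => rw [← hR2 y]
    rw [hRinner]
  -- star T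
  have hsT : star T = (α₀ : ℂ) • (1 : 𝕳 →L[ℂ] 𝕳) + (α₁ : ℂ) • P
      + (-(Complex.I * (a₂ : ℂ))) • R + (α₃ : ℂ) • (Complex.I • (R * P)) := by
    rw [hT]
    simp only [star_add, star_smul, star_one, star_mul, hsP, hsR, Complex.star_def,
      Complex.conj_I, Complex.conj_ofReal, map_mul, ← ContinuousLinearMap.mul_def]
    rw [hpr]
    module
  have hRne : R ≠ 0 := by
    intro h
    have : (1 : 𝕳 →L[ℂ] 𝕳) = 0 := by rw [← hrr, h, zero_mul]
    obtain ⟨x, hx⟩ := exists_ne (0 : 𝕳)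
    exact hx (by simpa using congrArg (fun A => A x) this)
  have hE : NormedSpace.exp ((Complex.I * (ξ : ℂ)) • R) = (Real.cos ξ : ℂ) • 1 + (Complex.I * (Real.sin ξ : ℂ)) • R :=
    exp_I_smul_of_sq R hrr ξ
  have hD : T * (NormedSpace.exp ((Complex.I * (ξ : ℂ)) • R) * P)
      - (NormedSpace.exp ((Complex.I * (ξ : ℂ)) • R) * P) * star T
      = ((2 * Complex.I) * ((α₃:ℂ) * (Real.cos ξ : ℂ) - (α₁:ℂ) * (Real.sin ξ : ℂ))) • R := by
    rw [hE, hsT, hT]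
    simp only [← ContinuousLinearMap.mul_def]
    simp only [mul_add, add_mul, smul_mul_assoc,
      mul_smul_comm, mul_assoc, mul_one, one_mul, hpp, hrr, hpr, hpp', hrr', hpr',
      mul_neg, neg_mul, smul_neg, neg_neg]
    match_scalars <;> ring
  rw [← star_eq_adjoint]
  simp only [← ContinuousLinearMap.mul_def]
  rw [← sub_eq_zero, hD, smul_eq_zero]
  constructor
  · rintro (h | h)
    · have h2 : (α₃:ℂ) * (Real.cos ξ : ℂ) - (α₁:ℂ) * (Real.sin ξ : ℂ) = 0 := by
        have h2I : (2 * Complex.I) ≠ 0 := by simp [Complex.I_ne_zero]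
        exact (mul_eq_zero.mp h).resolve_left h2I
      have : (α₁:ℂ) * (Real.sin ξ : ℂ) = (α₃:ℂ) * (Real.cos ξ : ℂ) := by linear_combination -h2
      exact_mod_cast this
    · exact absurd h hRne
  · intro h
    left
    have : (α₁:ℂ) * (Real.sin ξ : ℂ) = (α₃:ℂ) * (Real.cos ξ : ℂ) := by exact_mod_cast h
    linear_combination (2*Complex.I) * this.symm


/-- for `T = α₀I + α₁𝒫 + α₂ℛ + α₃ iℛ𝒫` with `α₀, α₁, α₃` real and `α₂`
purely imaginary, `T𝒫_ξ = 𝒫_ξT*` holds iff `α₁ sin ξ = α₃ cos ξ`; consequently there is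
always some `ξ ∈ [0, 2π)` for which `T` is self-adjoint in the Krein space of `𝒫_ξ`. -/
theorem krein_selfAdjoint_iff_angle
    {𝕳 : Type*} [NormedAddCommGroup 𝕳] [InnerProductSpace ℂ 𝕳] [CompleteSpace 𝕳]
    [Nontrivial 𝕳]
    (P R : 𝕳 →L[ℂ] 𝕳)
    (hP2 : ∀ f, P (P f) = f)
    (hPinner : ∀ f g : 𝕳, ⟪P f, P g⟫_ℂ = ⟪f, g⟫_ℂ)
    (hR2 : ∀ f, R (R f) = f)
    (hRinner : ∀ f g : 𝕳, ⟪R f, R g⟫_ℂ = ⟪f, g⟫_ℂ)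
    (hanti : P ∘L R = -(R ∘L P))
    (α₀ α₁ α₃ a₂ : ℝ)
    (T : 𝕳 →L[ℂ] 𝕳)
    (hT : T = (α₀ : ℂ) • (1 : 𝕳 →L[ℂ] 𝕳) + (α₁ : ℂ) • P
        + (Complex.I * (a₂ : ℂ)) • R + (α₃ : ℂ) • (Complex.I • (R ∘L P)))
    (ξ : ℝ)
    (Pξ : 𝕳 →L[ℂ] 𝕳)
    (hPξ : Pξ = NormedSpace.exp ((Complex.I * (ξ : ℂ)) • R) ∘L P) :
    (T ∘L Pξ = Pξ ∘L ContinuousLinearMap.adjoint T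
      ↔ α₁ * Real.sin ξ = α₃ * Real.cos ξ)
    ∧ ∃ ξ' ∈ Set.Ico (0 : ℝ) (2 * π),
        T ∘L (NormedSpace.exp ((Complex.I * (ξ' : ℂ)) • R) ∘L P)
          = (NormedSpace.exp ((Complex.I * (ξ' : ℂ)) • R) ∘L P)
              ∘L ContinuousLinearMap.adjoint T := by
  subst hPξ
  have key := fun (ξ' : ℝ) =>
    krein_key P R hP2 hPinner hR2 hRinner hanti α₀ α₁ α₃ a₂ T hT ξ'
  refine ⟨key ξ, ?_⟩
  have hpi := Real.pi_pos
  obtain ⟨ξ', hmem, heq⟩ :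
      ∃ ξ' ∈ Set.Ico (0 : ℝ) (2 * π), α₁ * Real.sin ξ' = α₃ * Real.cos ξ' := by
    by_cases h1 : α₁ = 0
    · refine ⟨π / 2, ⟨by positivity, by linarith⟩, ?_⟩
      simp [h1, Real.cos_pi_div_two]
    · set θ := Real.arctan (α₃ / α₁) with hθ
      have hθlt : θ < π / 2 := Real.arctan_lt_pi_div_two _
      have hθgt : -(π / 2) < θ := Real.neg_pi_div_two_lt_arctan _
      have hcos : Real.cos θ ≠ 0 := by
        have := Real.cos_pos_of_mem_Ioo ⟨hθgt, hθlt⟩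
        linarith
      have heq : α₁ * Real.sin θ = α₃ * Real.cos θ := by
        have htan : Real.tan θ = α₃ / α₁ := Real.tan_arctan _
        rw [Real.tan_eq_sin_div_cos] at htan
        field_simp at htan
        linarith [htan]
      by_cases hneg : θ < 0
      · refine ⟨θ + 2 * π, ⟨by linarith, by linarith⟩, ?_⟩
        rw [Real.sin_add_two_pi, Real.cos_add_two_pi]
        exact heq
      · exact ⟨θ, ⟨by linarith, by linarith⟩, heq⟩
  exact ⟨ξ', hmem, (key ξ').mpr heq⟩
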